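/- Combining footprints into an execution: let K ∈ ℕ, w ≥ v−1, and suppose given footprints τ_k on rounds [k−w, k] for k ≤ K and footprints T_k on rounds [k−w, k+1] for k ≤ K−1 such that T_k projects to τ_k on [k−w, k] and to τ_{k+1} on [k−w+1, k+1]. Then there exists a single execution ρ whose footprint on rounds [k−w, k] equals τ_k for every k ≤ K. -/

import Mathlib

/-- Actions of a round-based register protocol with `d` registers per round:
`read i α a` reads symbol `a` from register `α` of round `k - i` (for a process
at round `k`), `write α a` writes to register `α` of the current round, and
`incr` increments the process's round. -/
inductive RAct (d : ℕ) (D : Type) : Type where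
  | read (i : ℕ) (α : Fin d) (a : D)
  | write (α : Fin d) (a : D)
  | incr

/-- Abstract configurations: a set of populated locations `(state, round)`
together with the contents of every register `(round, index)`. -/
abbrev RConf (Q D : Type) (d : ℕ) := Set (Q × ℕ) × (ℕ × Fin d → D)

/-- A move: a transition together with the round at which it is taken. -/
abbrev RMove (Q D : Type) (d : ℕ) := (Q × RAct d D × Q) × ℕ

/-- Update of the set of populated locations: non-deserting or deserting. -/
def locUpd {Q : Type} (L L' : Set (Q × ℕ)) (src dst : Q × ℕ) : Prop :=
  L' = L ∪ {dst} ∨ L' = (L \ {src}) ∪ {dst}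

/-- Abstract step of a round-based register protocol via a given move. -/
def RStep {Q D : Type} {d : ℕ} (Tr : Set (Q × RAct d D × Q))
    (mv : RMove Q D d) (a a' : RConf Q D d) : Prop :=
  mv.1 ∈ Tr ∧ (mv.1.1, mv.2) ∈ a.1 ∧
  (match mv with
   | ((q, RAct.read i α s, q'), k) =>
       i ≤ k ∧ a.2 (k - i, α) = s ∧ a'.2 = a.2 ∧ locUpd a.1 a'.1 (q, k) (q', k)
   | ((q, RAct.write α s, q'), k) =>
       a'.2 = Function.update a.2 (k, α) s ∧ locUpd a.1 a'.1 (q, k) (q', k)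
   | ((q, RAct.incr, q'), k) =>
       a'.2 = a.2 ∧ locUpd a.1 a'.1 (q, k) (q', k + 1))

/-- A move has effect on round `k` when it is at round `k`, or is an
increment at round `k - 1`. -/
def hasEffect {Q D : Type} {d : ℕ} (mv : RMove Q D d) (k : ℕ) : Prop :=
  mv.2 = k ∨ (mv.1.2.1 = RAct.incr ∧ mv.2 + 1 = k)

/-- Round `r` belongs to the window of rounds `[j, k]`. -/
def InW (j k : ℤ) (r : ℕ) : Prop := j ≤ (r : ℤ) ∧ (r : ℤ) ≤ k

instance (j k : ℤ) (r : ℕ) : Decidable (InW j k r) := by unfold InW; infer_instance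

/-- Local configurations: locations of a window of rounds, and register
contents (`none` outside the window). -/
abbrev RLConf (Q D : Type) (d : ℕ) := Set (Q × ℕ) × (ℕ × Fin d → Option D)

/-- Projection of a configuration onto the window of rounds `[j, k]`. -/
def cproj {Q D : Type} {d : ℕ} (j k : ℤ) (a : RConf Q D d) : RLConf Q D d :=
  ({l ∈ a.1 | InW j k l.2}, fun r => if InW j k r.1 then some (a.2 r) else none)

/-- Projection of a local configuration onto a (smaller) window `[j, k]`. -/
def lproj {Q D : Type} {d : ℕ} (j k : ℤ) (c : RLConf Q D d) : RLConf Q D d :=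
  ({l ∈ c.1 | InW j k l.2}, fun r => if InW j k r.1 then c.2 r else none)

/-- Local step on the window `[j, k]`: existence of a global step whose
configurations project to the given local configurations. -/
def LocalStep {Q D : Type} {d : ℕ} (Tr : Set (Q × RAct d D × Q)) (j k : ℤ)
    (mv : RMove Q D d) (lam lam' : RLConf Q D d) : Prop :=
  ∃ a a', RStep Tr mv a a' ∧ cproj j k a = lam ∧ cproj j k a' = lam'

/-- A footprint: an alternating sequence of local configurations and moves,
given by a first local configuration and a list of (move, next configuration). -/
structure FP (Q D : Type) (d : ℕ) where
  first : RLConf Q D d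
  steps : List (RMove Q D d × RLConf Q D d)

/-- Validity of the step list of a footprint on the window `[j, k]`:
consecutive local configurations are linked by local steps and differ. -/
def FPValidFrom {Q D : Type} {d : ℕ} (Tr : Set (Q × RAct d D × Q)) (j k : ℤ) :
    RLConf Q D d → List (RMove Q D d × RLConf Q D d) → Prop
  | _, [] => True
  | c, (mv, c') :: rest => LocalStep Tr j k mv c c' ∧ c ≠ c' ∧ FPValidFrom Tr j k c' rest

/-- A valid footprint on the window `[j, k]`. -/
def FP.Valid {Q D : Type} {d : ℕ} (Tr : Set (Q × RAct d D × Q)) (j k : ℤ)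
    (f : FP Q D d) : Prop :=
  (∃ a : RConf Q D d, cproj j k a = f.first) ∧ FPValidFrom Tr j k f.first f.steps

open Classical in
/-- Remove stuttering steps (those whose configuration equals the previous one). -/
noncomputable def squash {α β : Type _} : β → List (α × β) → List (α × β)
  | _, [] => []
  | c, (mv, c') :: rest => if c' = c then squash c rest else (mv, c') :: squash c' rest

/-- Projection of a footprint onto the window `[j, k]`: project every local
configuration and remove stuttering steps. -/
noncomputable def FP.proj {Q D : Type} {d : ℕ} (j k : ℤ) (f : FP Q D d) : FP Q D d :=
  ⟨lproj j k f.first,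
   squash (lproj j k f.first) (f.steps.map (fun p => (p.1, lproj j k p.2)))⟩

/-- An execution: a first configuration and a list of (move, next configuration). -/
structure RExec (Q D : Type) (d : ℕ) where
  first : RConf Q D d
  steps : List (RMove Q D d × RConf Q D d)

/-- Validity of the step list of an execution. -/
def RExecValidFrom {Q D : Type} {d : ℕ} (Tr : Set (Q × RAct d D × Q)) :
    RConf Q D d → List (RMove Q D d × RConf Q D d) → Prop
  | _, [] => True
  | c, (mv, c') :: rest => RStep Tr mv c c' ∧ RExecValidFrom Tr c' rest

/-- A valid execution. -/
def RExec.Valid {Q D : Type} {d : ℕ} (Tr : Set (Q × RAct d D × Q))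
    (e : RExec Q D d) : Prop :=
  RExecValidFrom Tr e.first e.steps

/-- The footprint of an execution on the window `[j, k]`: project every
configuration and remove stuttering steps. -/
noncomputable def RExec.fp {Q D : Type} {d : ℕ} (j k : ℤ) (e : RExec Q D d) : FP Q D d :=
  ⟨cproj j k e.first,
   squash (cproj j k e.first) (e.steps.map (fun p => (p.1, cproj j k p.2)))⟩

section Aux
variable {Q D : Type} {d : ℕ} {Tr : Set (Q × RAct d D × Q)}

/-- Source location of a move. -/
def msrc (mv : RMove Q D d) : Q × ℕ := (mv.1.1, mv.2)

/-- Destination location of a move. -/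
def mdst (mv : RMove Q D d) : Q × ℕ :=
  (mv.1.2.2, match mv.1.2.1 with | RAct.incr => mv.2 + 1 | _ => mv.2)

/-- Effect of a move on registers. -/
def mreg (mv : RMove Q D d) (f : ℕ × Fin d → D) : ℕ × Fin d → D :=
  match mv.1.2.1 with
  | RAct.write α s => Function.update f (mv.2, α) s
  | _ => f

/-- Effect of a move on locations, with desertion flag `φ`. -/
def locSet (mv : RMove Q D d) (L : Set (Q × ℕ)) (φ : Bool) : Set (Q × ℕ) :=
  if φ then (L \ {msrc mv}) ∪ {mdst mv} else L ∪ {mdst mv}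

/-- Read preconditions of a move. -/
def ReadOk (mv : RMove Q D d) (a : RConf Q D d) : Prop :=
  ∀ i α s, mv.1.2.1 = RAct.read i α s → i ≤ mv.2 ∧ a.2 (mv.2 - i, α) = s

lemma RStep_iff {mv : RMove Q D d} {a a' : RConf Q D d} :
    RStep Tr mv a a' ↔
      mv.1 ∈ Tr ∧ msrc mv ∈ a.1 ∧ ReadOk mv a ∧ a'.2 = mreg mv a.2 ∧
        ∃ φ, a'.1 = locSet mv a.1 φ := by
  obtain ⟨⟨q, act, q'⟩, r⟩ := mv
  have hloc : ∀ L' , locUpd a.1 L' (q, r) ((q', r) : Q × ℕ) ↔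
      (∃ φ : Bool, L' = if φ then (a.1 \ {(q,r)}) ∪ {(q', r)} else a.1 ∪ {(q', r)}) := by
    intro L'
    constructor
    · rintro (h | h)
      · exact ⟨false, h⟩
      · exact ⟨true, h⟩
    · rintro ⟨φ, h⟩
      cases φ
      · exact Or.inl h
      · exact Or.inr h
  cases act with
  | read i α s =>
      constructor
      · rintro ⟨h1, h2, h3, h4, h5, h6⟩
        refine ⟨h1, h2, ?_, h5, ?_⟩
        · rintro i' α' s' heq
          simp only [RAct.read.injEq] at heq
          obtain ⟨rfl, rfl, rfl⟩ := heq
          exact ⟨h3, h4⟩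
        · rcases h6 with h | h
          · exact ⟨false, h⟩
          · exact ⟨true, h⟩
      · rintro ⟨h1, h2, h3, h4, φ, h5⟩
        obtain ⟨hi, hv⟩ := h3 i α s rfl
        refine ⟨h1, h2, hi, hv, h4, ?_⟩
        cases φ
        · exact Or.inl h5
        · exact Or.inr h5
  | write α s =>
      constructor
      · rintro ⟨h1, h2, h4, h6⟩
        refine ⟨h1, h2, ?_, h4, ?_⟩
        · rintro i' α' s' heq; exact absurd heq (by simp)
        · rcases h6 with h | h
          · exact ⟨false, h⟩
          · exact ⟨true, h⟩
      · rintro ⟨h1, h2, _, h4, φ, h5⟩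
        refine ⟨h1, h2, h4, ?_⟩
        cases φ
        · exact Or.inl h5
        · exact Or.inr h5
  | incr =>
      constructor
      · rintro ⟨h1, h2, h4, h6⟩
        refine ⟨h1, h2, ?_, h4, ?_⟩
        · rintro i' α' s' heq; exact absurd heq (by simp)
        · rcases h6 with h | h
          · exact ⟨false, h⟩
          · exact ⟨true, h⟩
      · rintro ⟨h1, h2, _, h4, φ, h5⟩
        refine ⟨h1, h2, h4, ?_⟩
        cases φ
        · exact Or.inl h5
        · exact Or.inr h5

lemma mem_locSet {mv : RMove Q D d} {L : Set (Q × ℕ)} {φ : Bool} {p : Q × ℕ} :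
    p ∈ locSet mv L φ ↔ p = mdst mv ∨ (p ∈ L ∧ ¬(φ = true ∧ p = msrc mv)) := by
  cases φ <;> simp [locSet, Set.mem_union, Set.mem_diff, Set.mem_singleton_iff] <;> tauto

lemma mreg_apply_ne {mv : RMove Q D d} {f : ℕ × Fin d → D} {p : ℕ × Fin d}
    (hp : p.1 ≠ mv.2) : mreg mv f p = f p := by
  obtain ⟨⟨q, act, q'⟩, r⟩ := mv
  cases act <;> simp only [mreg]
  exact Function.update_of_ne (by rintro rfl; exact hp rfl) _ _

lemma mreg_congr_at {mv : RMove Q D d} {f g : ℕ × Fin d → D} {p : ℕ × Fin d}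
    (h : f p = g p) : mreg mv f p = mreg mv g p := by
  obtain ⟨⟨q, act, q'⟩, r⟩ := mv
  cases act <;> simp only [mreg] <;> try exact h
  rename_i α s
  by_cases hp : p = (r, α)
  · subst hp; simp
  · rw [Function.update_of_ne hp, Function.update_of_ne hp]; exact h

lemma mdst_snd {mv : RMove Q D d} :
    (mdst mv).2 = mv.2 ∨ (mv.1.2.1 = RAct.incr ∧ (mdst mv).2 = mv.2 + 1) := by
  obtain ⟨⟨q, act, q'⟩, r⟩ := mv
  cases act <;> simp [mdst]

lemma msrc_snd {mv : RMove Q D d} : (msrc mv).2 = mv.2 := rfl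

end Aux
section Aux2
variable {Q D : Type} {d : ℕ} {Tr : Set (Q × RAct d D × Q)}

lemma RStep_transfer {mv : RMove Q D d} {a a' b : RConf Q D d}
    (h : RStep Tr mv a a') (hq : msrc mv ∈ b.1) (hro : ReadOk mv b) :
    ∃ (b' : RConf Q D d) (φ : Bool), RStep Tr mv b b' ∧ b'.2 = mreg mv b.2 ∧
      b'.1 = locSet mv b.1 φ ∧ a'.1 = locSet mv a.1 φ := by
  rw [RStep_iff] at h
  obtain ⟨h1, _, _, _, φ, h5⟩ := h
  exact ⟨(locSet mv b.1 φ, mreg mv b.2), φ,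
    RStep_iff.mpr ⟨h1, hq, hro, rfl, φ, rfl⟩, rfl, rfl, h5⟩

lemma cproj_eq_of_agree {j k : ℤ} {a b : RConf Q D d}
    (hl : ∀ p : Q × ℕ, InW j k p.2 → (p ∈ a.1 ↔ p ∈ b.1))
    (hr : ∀ r : ℕ × Fin d, InW j k r.1 → a.2 r = b.2 r) :
    cproj j k a = cproj j k b := by
  unfold cproj
  refine Prod.ext ?_ ?_
  · ext p
    simp only [Set.mem_setOf_eq]
    constructor
    · rintro ⟨hp, hw⟩; exact ⟨(hl p hw).1 hp, hw⟩
    · rintro ⟨hp, hw⟩; exact ⟨(hl p hw).2 hp, hw⟩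
  · funext r
    by_cases hw : InW j k r.1
    · simp [hw, hr r hw]
    · simp [hw]

lemma loc_agree_of_cproj_eq {j k : ℤ} {a b : RConf Q D d}
    (h : cproj j k a = cproj j k b) {p : Q × ℕ} (hw : InW j k p.2) :
    p ∈ a.1 ↔ p ∈ b.1 := by
  have := congrArg Prod.fst h
  simp only [cproj] at this
  have h2 := Set.ext_iff.mp this p
  simp only [Set.mem_setOf_eq] at h2
  constructor
  · intro hp; exact (h2.mp ⟨hp, hw⟩).1
  · intro hp; exact (h2.mpr ⟨hp, hw⟩).1

lemma reg_agree_of_cproj_eq {j k : ℤ} {a b : RConf Q D d}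
    (h : cproj j k a = cproj j k b) {r : ℕ × Fin d} (hw : InW j k r.1) :
    a.2 r = b.2 r := by
  have := congrFun (congrArg Prod.snd h) r
  simp only [cproj, hw, if_pos] at this
  exact Option.some.inj this

lemma cproj_ne_of_loc {j k : ℤ} {a b : RConf Q D d} {p : Q × ℕ} (hw : InW j k p.2)
    (hne : ¬(p ∈ a.1 ↔ p ∈ b.1)) : cproj j k a ≠ cproj j k b :=
  fun h => hne (loc_agree_of_cproj_eq h hw)

lemma cproj_ne_of_reg {j k : ℤ} {a b : RConf Q D d} {r : ℕ × Fin d} (hw : InW j k r.1)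
    (hne : a.2 r ≠ b.2 r) : cproj j k a ≠ cproj j k b :=
  fun h => hne (reg_agree_of_cproj_eq h hw)

lemma exists_diff {j k : ℤ} {a b : RConf Q D d} (h : cproj j k a ≠ cproj j k b) :
    (∃ p : Q × ℕ, InW j k p.2 ∧ ¬(p ∈ a.1 ↔ p ∈ b.1)) ∨
      (∃ r : ℕ × Fin d, InW j k r.1 ∧ a.2 r ≠ b.2 r) := by
  by_contra hc
  push_neg at hc
  obtain ⟨hc1, hc2⟩ := hc
  refine h (cproj_eq_of_agree ?_ ?_)
  · intro p hw
    exact hc1 p hw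
  · intro r hw
    exact hc2 r hw

lemma InW_mono {j k j' k' : ℤ} {r : ℕ} (hj : j ≤ j') (hk : k' ≤ k)
    (h : InW j' k' r) : InW j k r := ⟨le_trans hj h.1, le_trans h.2 hk⟩

lemma lproj_cproj {j k j' k' : ℤ} (hj : j ≤ j') (hk : k' ≤ k) (a : RConf Q D d) :
    lproj j' k' (cproj j k a) = cproj j' k' a := by
  unfold lproj cproj
  refine Prod.ext ?_ ?_
  · ext p
    simp only [Set.mem_setOf_eq]
    constructor
    · rintro ⟨⟨hp, _⟩, hw⟩; exact ⟨hp, hw⟩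
    · rintro ⟨hp, hw⟩; exact ⟨⟨hp, InW_mono hj hk hw⟩, hw⟩
  · funext r
    by_cases hw : InW j' k' r.1
    · simp [hw, InW_mono hj hk hw]
    · simp [hw]

/-- A step changing the projection onto `[j,k]` has effect on some round of the window. -/
lemma diff_round {mv : RMove Q D d} {a a' : RConf Q D d} {j k : ℤ}
    (h : RStep Tr mv a a') (hne : cproj j k a ≠ cproj j k a') :
    ∃ R : ℕ, InW j k R ∧ hasEffect mv R := by
  rw [RStep_iff] at h
  obtain ⟨_, _, _, hreg, φ, hloc⟩ := h
  rcases exists_diff hne with ⟨p, hw, hp⟩ | ⟨r, hw, hr⟩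
  · -- location difference: p = msrc or p = mdst
    by_cases hs : p = msrc mv
    · exact ⟨p.2, hw, Or.inl (by rw [hs]; rfl)⟩
    · by_cases hd : p = mdst mv
      · subst hd
        rcases mdst_snd (mv := mv) with h1 | ⟨h1, h2⟩
        · exact ⟨(mdst mv).2, hw, Or.inl h1.symm⟩
        · exact ⟨(mdst mv).2, hw, Or.inr ⟨h1, h2.symm⟩⟩
      · exfalso
        apply hp
        rw [hloc, mem_locSet]
        constructor
        · intro hpa; exact Or.inr ⟨hpa, fun hc => hs hc.2⟩
        · rintro (hc | ⟨hpa, _⟩)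
          · exact absurd hc hd
          · exact hpa
  · refine ⟨r.1, hw, Or.inl ?_⟩
    by_contra hc
    exact hr (by rw [hreg, mreg_apply_ne (fun h => hc h.symm)])

end Aux2
section Aux3
variable {Q D : Type} {d : ℕ} {Tr : Set (Q × RAct d D × Q)}

/-- No step of the list stutters on the window `[j, k]`. -/
def NoStutter {Q D : Type} {d : ℕ} (j k : ℤ) :
    RConf Q D d → List (RMove Q D d × RConf Q D d) → Prop
  | _, [] => True
  | c, (_, c') :: rest => cproj j k c ≠ cproj j k c' ∧ NoStutter j k c' rest

lemma squash_nil {α β : Type _} (c : β) : squash c ([] : List (α × β)) = [] := by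
  simp [squash]

lemma squash_cons_eq {α β : Type _} {c c' : β} (mv : α) (l : List (α × β)) (h : c' = c) :
    squash c ((mv, c') :: l) = squash c l := by
  simp [squash, h]

lemma squash_cons_ne {α β : Type _} {c c' : β} (mv : α) (l : List (α × β)) (h : c' ≠ c) :
    squash c ((mv, c') :: l) = (mv, c') :: squash c' l := by
  simp [squash, h]

lemma squash_eq_self {j k : ℤ} :
    ∀ (l : List (RMove Q D d × RLConf Q D d)) (c : RLConf Q D d),
      FPValidFrom Tr j k c l → squash c l = l := by
  intro l
  induction l with
  | nil => intro c _; exact squash_nil c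
  | cons p rest ih =>
      obtain ⟨mv, c'⟩ := p
      intro c hv
      obtain ⟨_, hne, hrest⟩ := hv
      rw [squash_cons_ne mv rest (fun h => hne h.symm), ih c' hrest]

/-- Realization of a valid footprint on a window `[j, k]` with `j ≤ 0` as an
execution, starting from any configuration with the right projection. -/
lemma realize {j k : ℤ} (hj : j ≤ 0) :
    ∀ (fs : List (RMove Q D d × RLConf Q D d)) (b : RConf Q D d),
      FPValidFrom Tr j k (cproj j k b) fs →
      ∃ ns : List (RMove Q D d × RConf Q D d),
        RExecValidFrom Tr b ns ∧ NoStutter j k b ns ∧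
          ns.map (fun p => (p.1, cproj j k p.2)) = fs := by
  intro fs
  induction fs with
  | nil => exact fun b _ => ⟨[], trivial, trivial, rfl⟩
  | cons p rest ih =>
      obtain ⟨mv, c'⟩ := p
      intro b hv
      obtain ⟨⟨a, a', hstep, hpa, hpa'⟩, hne, hrest⟩ := hv
      have hne' : cproj j k a ≠ cproj j k a' := by rw [hpa, hpa']; exact hne
      obtain ⟨R, hRw, hReff⟩ := diff_round hstep hne'
      have hmv2 : InW j k mv.2 := by
        rcases hReff with h | ⟨_, h⟩
        · rwa [h]
        · constructor
          · exact le_trans hj (Int.ofNat_nonneg mv.2)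
          · have : ((mv.2 : ℤ) + 1) ≤ k := by rw [show ((mv.2:ℤ)+1) = ((mv.2+1 : ℕ) : ℤ) by push_cast; ring, h]; exact hRw.2
            omega
      obtain ⟨htr, hsrc, hro, hareg, _⟩ := RStep_iff.mp hstep
      have hsb : msrc mv ∈ b.1 :=
        (loc_agree_of_cproj_eq hpa (by rw [msrc_snd]; exact hmv2)).mp hsrc
      have hrob : ReadOk mv b := by
        intro i α s hact
        obtain ⟨hi, hval⟩ := hro i α s hact
        refine ⟨hi, ?_⟩
        rw [← hval]
        have hwin : InW j k (mv.2 - i : ℕ) := by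
          constructor
          · exact le_trans hj (Int.ofNat_nonneg _)
          · exact le_trans (by exact_mod_cast Nat.sub_le mv.2 i) hmv2.2
        exact (reg_agree_of_cproj_eq hpa hwin).symm
      obtain ⟨b', φ, hstepb, hbreg, hbloc, haloc⟩ := RStep_transfer hstep hsb hrob
      have hproj : cproj j k b' = c' := by
        rw [← hpa']
        refine cproj_eq_of_agree ?_ ?_
        · intro p hw
          rw [hbloc, haloc, mem_locSet, mem_locSet]
          have : p ∈ b.1 ↔ p ∈ a.1 := (loc_agree_of_cproj_eq hpa hw).symm
          tauto
        · intro r hw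
          rw [hbreg, hareg]
          exact mreg_congr_at ((reg_agree_of_cproj_eq hpa hw).symm)
      have hrest' : FPValidFrom Tr j k (cproj j k b') rest := by rw [hproj]; exact hrest
      obtain ⟨ns, hval, hnost, hmap⟩ := ih b' hrest'
      refine ⟨(mv, b') :: ns, ⟨hstepb, hval⟩, ⟨?_, hnost⟩, ?_⟩
      · rw [hproj]; exact hne
      · simp only [List.map_cons, hmap, hproj]

end Aux3
section Aux4
variable {Q D : Type} {d : ℕ} {Tr : Set (Q × RAct d D × Q)}

/-- Mapped projection of execution steps. -/
def cmap {Q D : Type} {d : ℕ} (j k : ℤ) (l : List (RMove Q D d × RConf Q D d)) :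
    List (RMove Q D d × RLConf Q D d) :=
  l.map (fun p => (p.1, cproj j k p.2))

/-- Mapped projection of footprint steps. -/
def lmap {Q D : Type} {d : ℕ} (j k : ℤ) (l : List (RMove Q D d × RLConf Q D d)) :
    List (RMove Q D d × RLConf Q D d) :=
  l.map (fun p => (p.1, lproj j k p.2))

@[simp] lemma cmap_nil {j k : ℤ} : cmap j k ([] : List (RMove Q D d × RConf Q D d)) = [] := rfl
@[simp] lemma cmap_cons {j k : ℤ} {mv : RMove Q D d} {c : RConf Q D d} {l} :
    cmap j k ((mv, c) :: l) = (mv, cproj j k c) :: cmap j k l := rfl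
@[simp] lemma lmap_nil {j k : ℤ} : lmap j k ([] : List (RMove Q D d × RLConf Q D d)) = [] := rfl
@[simp] lemma lmap_cons {j k : ℤ} {mv : RMove Q D d} {c : RLConf Q D d} {l} :
    lmap j k ((mv, c) :: l) = (mv, lproj j k c) :: lmap j k l := rfl

lemma cproj_eq_of_agree_le {N j k : ℤ} (hk : k ≤ N) {a b : RConf Q D d}
    (hagl : ∀ p : Q × ℕ, (p.2 : ℤ) ≤ N → (p ∈ a.1 ↔ p ∈ b.1))
    (hagr : ∀ r : ℕ × Fin d, (r.1 : ℤ) ≤ N → a.2 r = b.2 r) :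
    cproj j k a = cproj j k b :=
  cproj_eq_of_agree (fun p hw => hagl p (le_trans hw.2 hk))
    (fun r hw => hagr r (le_trans hw.2 hk))

lemma mreg_apply_ne_of_write {mv : RMove Q D d} {f : ℕ × Fin d → D} {p : ℕ × Fin d}
    (h : ∀ α s, mv.1.2.1 = RAct.write α s → p.1 ≠ mv.2) : mreg mv f p = f p := by
  obtain ⟨⟨q, act, q'⟩, r⟩ := mv
  cases act with
  | read i α s => rfl
  | incr => rfl
  | write α s =>
      simp only [mreg]
      exact Function.update_of_ne (by rintro rfl; exact h α s rfl rfl) _ _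

lemma diff_data {mv : RMove Q D d} {a a' : RConf Q D d} (h : RStep Tr mv a a')
    {j k : ℤ} (hne : cproj j k a ≠ cproj j k a') :
    ∃ R : ℕ, InW j k R ∧ hasEffect mv R ∧
      ((∃ p : Q × ℕ, p.2 = R ∧ ¬(p ∈ a.1 ↔ p ∈ a'.1)) ∨
        (∃ r : ℕ × Fin d, r.1 = R ∧ a.2 r ≠ a'.2 r)) := by
  rw [RStep_iff] at h
  obtain ⟨_, _, _, hreg, φ, hloc⟩ := h
  rcases exists_diff hne with ⟨p, hw, hp⟩ | ⟨r, hw, hr⟩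
  · by_cases hs : p = msrc mv
    · exact ⟨p.2, hw, Or.inl (by rw [hs]; rfl), Or.inl ⟨p, rfl, hp⟩⟩
    · by_cases hd : p = mdst mv
      · refine ⟨p.2, hw, ?_, Or.inl ⟨p, rfl, hp⟩⟩
        subst hd
        rcases mdst_snd (mv := mv) with h1 | ⟨h1, h2⟩
        · exact Or.inl h1.symm
        · exact Or.inr ⟨h1, h2.symm⟩
      · exfalso
        apply hp
        rw [hloc, mem_locSet]
        constructor
        · intro hpa; exact Or.inr ⟨hpa, fun hc => hs hc.2⟩
        · rintro (hc | ⟨hpa, _⟩)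
          · exact absurd hc hd
          · exact hpa
  · refine ⟨r.1, hw, Or.inl ?_, Or.inr ⟨r, rfl, hr⟩⟩
    by_contra hc
    exact hr (by rw [hreg, mreg_apply_ne (fun hh => hc hh.symm)])

lemma iff_ne_transfer {P P' R S : Prop} (h1 : P ↔ R) (h2 : P' ↔ S) (h : ¬(P ↔ P')) :
    ¬(R ↔ S) := fun hh => h ((h1.trans hh).trans h2.symm)

end Aux4
section Aux5
variable {Q D : Type} {d : ℕ} {Tr : Set (Q × RAct d D × Q)}

lemma cproj_ne_transfer {j k : ℤ} {a a' b b' : RConf Q D d} {R : ℕ} (hw : InW j k R)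
    (hdata : (∃ p : Q × ℕ, p.2 = R ∧ ¬(p ∈ a.1 ↔ p ∈ a'.1)) ∨
      (∃ r : ℕ × Fin d, r.1 = R ∧ a.2 r ≠ a'.2 r))
    (h1l : ∀ p : Q × ℕ, p.2 = R → (p ∈ b.1 ↔ p ∈ a.1))
    (h2l : ∀ p : Q × ℕ, p.2 = R → (p ∈ b'.1 ↔ p ∈ a'.1))
    (h1r : ∀ r : ℕ × Fin d, r.1 = R → b.2 r = a.2 r)
    (h2r : ∀ r : ℕ × Fin d, r.1 = R → b'.2 r = a'.2 r) :
    cproj j k b ≠ cproj j k b' := by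
  rcases hdata with ⟨p, hp2, hpne⟩ | ⟨r, hr1, hrne⟩
  · exact cproj_ne_of_loc (hp2 ▸ hw) (iff_ne_transfer (h1l p hp2).symm (h2l p hp2).symm hpne)
  · exact cproj_ne_of_reg (hr1 ▸ hw) (by rw [h1r r hr1, h2r r hr1]; exact hrne)

/-- Transport a step along agreement on all rounds `≤ N`. -/
lemma step_transport {N : ℤ} {mv : RMove Q D d} {a a' b : RConf Q D d}
    (hstep : RStep Tr mv a a') (hmv2 : (mv.2 : ℤ) ≤ N)
    (hagl : ∀ p : Q × ℕ, (p.2 : ℤ) ≤ N → (p ∈ b.1 ↔ p ∈ a.1))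
    (hagr : ∀ r : ℕ × Fin d, (r.1 : ℤ) ≤ N → b.2 r = a.2 r) :
    ∃ (b' : RConf Q D d) (φ : Bool), RStep Tr mv b b' ∧ b'.2 = mreg mv b.2 ∧
      b'.1 = locSet mv b.1 φ ∧ a'.1 = locSet mv a.1 φ ∧
      (∀ p : Q × ℕ, (p.2 : ℤ) ≤ N → (p ∈ b'.1 ↔ p ∈ a'.1)) ∧
      (∀ r : ℕ × Fin d, (r.1 : ℤ) ≤ N → b'.2 r = a'.2 r) := by
  obtain ⟨htr, hsrc, hro, hareg, _⟩ := RStep_iff.mp hstep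
  have hsb : msrc mv ∈ b.1 := (hagl (msrc mv) (by rw [msrc_snd]; exact hmv2)).mpr hsrc
  have hrob : ReadOk mv b := by
    intro i α s hact
    obtain ⟨hi, hval⟩ := hro i α s hact
    refine ⟨hi, ?_⟩
    rw [← hval]
    exact hagr _ (le_trans (by exact_mod_cast Nat.sub_le mv.2 i) hmv2)
  obtain ⟨b', φ, hstepb, hbreg, hbloc, haloc⟩ := RStep_transfer hstep hsb hrob
  refine ⟨b', φ, hstepb, hbreg, hbloc, haloc, ?_, ?_⟩
  · intro p hp
    rw [hbloc, haloc, mem_locSet, mem_locSet]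
    have := hagl p hp
    tauto
  · intro r hr
    rw [hbreg, hareg]
    exact mreg_congr_at (hagr r hr)

end Aux5
section Aux6
variable {Q D : Type} {d v : ℕ} {Tr : Set (Q × RAct d D × Q)}

lemma mdst_incr {mv : RMove Q D d} (h : mv.1.2.1 = RAct.incr) : (mdst mv).2 = mv.2 + 1 := by
  obtain ⟨⟨q, act, q'⟩, r⟩ := mv
  cases act <;> simp_all [mdst]

set_option maxHeartbeats 2000000 in
lemma insert_step
    (hvis : ∀ q i α s q', ((q, RAct.read i α s, q') : Q × RAct d D × Q) ∈ Tr → i ≤ v)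
    (w K : ℕ) (hw : v ≤ w + 1) {b : RConf Q D d} {mv2 : RMove Q D d} {tc' : RLConf Q D d}
    (hls : LocalStep Tr ((K : ℤ) - w) ((K : ℤ) + 1) mv2 (cproj ((K : ℤ) - w) ((K : ℤ) + 1) b) tc')
    (htne : cproj ((K : ℤ) - w) ((K : ℤ) + 1) b ≠ tc')
    (hvist : lproj ((K : ℤ) - w) (K : ℤ) tc' = cproj ((K : ℤ) - w) (K : ℤ) b) :
    ∃ b' : RConf Q D d, RStep Tr mv2 b b' ∧ cproj ((K : ℤ) - w) ((K : ℤ) + 1) b' = tc' ∧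
      (∀ p : Q × ℕ, (p.2 : ℤ) ≤ (K : ℤ) → (p ∈ b'.1 ↔ p ∈ b.1)) ∧
      (∀ r : ℕ × Fin d, (r.1 : ℤ) ≤ (K : ℤ) → b'.2 r = b.2 r) ∧
      cproj (-(w : ℤ)) ((K : ℤ) + 1) b ≠ cproj (-(w : ℤ)) ((K : ℤ) + 1) b' := by
  obtain ⟨aT, aT', hstepT, hpT, hpT'⟩ := hls
  obtain ⟨htr, hsrcT, hroT, haregT, _⟩ := RStep_iff.mp hstepT
  have hneT : cproj ((K : ℤ) - w) ((K : ℤ) + 1) aT ≠ cproj ((K : ℤ) - w) ((K : ℤ) + 1) aT' := by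
    rw [hpT, hpT']; exact htne
  obtain ⟨R, hRw, hReff, hdata⟩ := diff_data hstepT hneT
  have hKK1 : ((K : ℤ) - w) ≤ (K : ℤ) := by omega
  have hK1 : (K : ℤ) ≤ (K : ℤ) + 1 := by omega
  have hinv : cproj ((K : ℤ) - w) (K : ℤ) aT = cproj ((K : ℤ) - w) (K : ℤ) aT' := by
    rw [← lproj_cproj le_rfl hK1 aT, ← lproj_cproj le_rfl hK1 aT', hpT, hpT', hvist,
      lproj_cproj le_rfl hK1]
  have hnotov : ¬ InW ((K : ℤ) - w) (K : ℤ) R := by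
    intro hov
    rcases hdata with ⟨p, hp2, hpne⟩ | ⟨r, hr1, hrne⟩
    · exact hpne (loc_agree_of_cproj_eq hinv (by rw [hp2]; exact hov))
    · exact hrne (reg_agree_of_cproj_eq hinv (by rw [hr1]; exact hov))
  have hR : (R : ℤ) = (K : ℤ) + 1 := by
    unfold InW at hRw hnotov
    omega
  -- bounds on the move's round
  have hmv2b : (mv2.2 : ℤ) = (K : ℤ) + 1 ∨ (mv2.1.2.1 = RAct.incr ∧ (mv2.2 : ℤ) = (K : ℤ)) := by
    rcases hReff with h | ⟨h1, h2⟩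
    · left; rw [h, hR]
    · right
      refine ⟨h1, ?_⟩
      have : ((mv2.2 : ℤ) + 1) = (R : ℤ) := by exact_mod_cast congrArg (Nat.cast : ℕ → ℤ) h2
      omega
  have hmv2tw : InW ((K : ℤ) - w) ((K : ℤ) + 1) mv2.2 := by
    rcases hmv2b with h | ⟨_, h⟩ <;> (constructor <;> omega)
  have hq : msrc mv2 ∈ b.1 :=
    (loc_agree_of_cproj_eq hpT (by rw [msrc_snd]; exact hmv2tw)).mp hsrcT
  have hwrK1 : ∀ α s, mv2.1.2.1 = RAct.write α s → (mv2.2 : ℤ) = (K : ℤ) + 1 := by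
    intro α s hact
    rcases hmv2b with h | ⟨h1, _⟩
    · exact h
    · rw [hact] at h1; exact absurd h1 (by simp)
  have hrdK1 : ∀ i α s, mv2.1.2.1 = RAct.read i α s → (mv2.2 : ℤ) = (K : ℤ) + 1 := by
    intro i α s hact
    rcases hmv2b with h | ⟨h1, _⟩
    · exact h
    · rw [hact] at h1; exact absurd h1 (by simp)
  have hrob : ReadOk mv2 b := by
    intro i α s hact
    obtain ⟨hi, hval⟩ := hroT i α s hact
    have hiv : i ≤ v := by
      have hTr' := htr
      rw [show mv2.1 = (mv2.1.1, mv2.1.2.1, mv2.1.2.2) from rfl, hact] at hTr'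
      exact hvis _ i α s _ hTr'
    refine ⟨hi, ?_⟩
    rw [← hval]
    refine (reg_agree_of_cproj_eq hpT ?_).symm
    have hcast : ((mv2.2 - i : ℕ) : ℤ) = (mv2.2 : ℤ) - i := by
      rw [Nat.cast_sub hi]
    constructor
    · rw [hcast, hrdK1 i α s hact]
      omega
    · rw [hcast]
      omega
  obtain ⟨b', φ, hstepb, hbreg, hbloc, hTloc⟩ := RStep_transfer hstepT hq hrob
  have hmdst : ((mdst mv2).2 : ℤ) = (K : ℤ) + 1 ∨ ((mdst mv2).2 : ℤ) = (K : ℤ) + 2 := by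
    rcases mdst_snd (mv := mv2) with h | ⟨_, h⟩
    · rcases hmv2b with h2 | ⟨h1', h2⟩
      · left; rw [h]; exact h2
      · exfalso
        have := mdst_incr h1'
        omega
    · rcases hmv2b with h2 | ⟨_, h2⟩
      · right
        rw [show ((mdst mv2).2 : ℤ) = (mv2.2 : ℤ) + 1 by exact_mod_cast congrArg (Nat.cast : ℕ → ℤ) h]
        omega
      · left
        rw [show ((mdst mv2).2 : ℤ) = (mv2.2 : ℤ) + 1 by exact_mod_cast congrArg (Nat.cast : ℕ → ℤ) h]
        omega
  have htw' : cproj ((K : ℤ) - w) ((K : ℤ) + 1) b' = tc' := by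
    rw [← hpT']
    refine cproj_eq_of_agree ?_ ?_
    · intro p hwp
      rw [hbloc, hTloc, mem_locSet, mem_locSet]
      have hba : p ∈ b.1 ↔ p ∈ aT.1 := (loc_agree_of_cproj_eq hpT hwp).symm
      tauto
    · intro r hwr
      rw [hbreg, haregT]
      exact mreg_congr_at ((reg_agree_of_cproj_eq hpT hwr).symm)
  have hagl' : ∀ p : Q × ℕ, (p.2 : ℤ) ≤ (K : ℤ) → (p ∈ b'.1 ↔ p ∈ b.1) := by
    intro p hp
    have hpd : p ≠ mdst mv2 := by
      intro he
      rw [he] at hp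
      rcases hmdst with h | h <;> omega
    have hps : φ = true → p ≠ msrc mv2 := by
      intro hφ he
      have hms : (mv2.2 : ℤ) ≤ (K : ℤ) := by rw [he] at hp; exact hp
      rcases hmv2b with h | ⟨hact, hKe⟩
      · omega
      · have h1 : msrc mv2 ∈ aT'.1 := by
          refine (loc_agree_of_cproj_eq hinv ?_).mp hsrcT
          show InW _ _ mv2.2
          constructor <;> omega
        rw [hTloc, mem_locSet] at h1
        rcases h1 with h1 | ⟨_, h1⟩
        · have h2 := congrArg Prod.snd h1
          have h3 : ((mdst mv2).2 : ℤ) = (mv2.2 : ℤ) := by exact_mod_cast h2.symm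
          rcases hmdst with h4 | h4 <;> omega
        · exact h1 ⟨hφ, rfl⟩
    rw [hbloc, mem_locSet]
    constructor
    · rintro (he | ⟨hpb, _⟩)
      · exact absurd he hpd
      · exact hpb
    · intro hpb
      exact Or.inr ⟨hpb, fun hc => hps hc.1 hc.2⟩
  have hagr' : ∀ r : ℕ × Fin d, (r.1 : ℤ) ≤ (K : ℤ) → b'.2 r = b.2 r := by
    intro r hr
    rw [hbreg]
    refine mreg_apply_ne_of_write ?_
    intro α s hact he
    have h1 := hwrK1 α s hact
    have h2 : (r.1 : ℤ) = (mv2.2 : ℤ) := by exact_mod_cast congrArg (Nat.cast : ℕ → ℤ) he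
    omega
  have hne' : cproj (-(w : ℤ)) ((K : ℤ) + 1) b ≠ cproj (-(w : ℤ)) ((K : ℤ) + 1) b' := by
    have hch : cproj ((K : ℤ) - w) ((K : ℤ) + 1) b' = cproj ((K : ℤ) - w) ((K : ℤ) + 1) aT' :=
      htw'.trans hpT'.symm
    refine cproj_ne_transfer (a := aT) (a' := aT') ⟨by omega, by omega⟩ hdata ?_ ?_ ?_ ?_
    · intro p hp2
      exact (loc_agree_of_cproj_eq hpT (by rw [hp2]; exact hRw)).symm
    · intro p hp2
      exact loc_agree_of_cproj_eq hch (by rw [hp2]; exact hRw)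
    · intro r hr1
      exact (reg_agree_of_cproj_eq hpT (by rw [hr1]; exact hRw)).symm
    · intro r hr1
      exact reg_agree_of_cproj_eq hch (by rw [hr1]; exact hRw)
  exact ⟨b', hstepb, htw', hagl', hagr', hne'⟩
end Aux6
section Walk
variable {Q D : Type} {d v : ℕ} {Tr : Set (Q × RAct d D × Q)}

set_option maxHeartbeats 2000000 in
lemma merge_walk
    (hvis : ∀ q i α s q', ((q, RAct.read i α s, q') : Q × RAct d D × Q) ∈ Tr → i ≤ v)
    (w K : ℕ) (hw : v ≤ w + 1) :
    ∀ (n : ℕ) (ρs : List (RMove Q D d × RConf Q D d))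
      (ts : List (RMove Q D d × RLConf Q D d)) (b bo : RConf Q D d),
      ρs.length + ts.length ≤ n →
      RExecValidFrom Tr bo ρs →
      NoStutter (-(w : ℤ)) (K : ℤ) bo ρs →
      (∀ p : Q × ℕ, (p.2 : ℤ) ≤ (K : ℤ) → (p ∈ b.1 ↔ p ∈ bo.1)) →
      (∀ r : ℕ × Fin d, (r.1 : ℤ) ≤ (K : ℤ) → b.2 r = bo.2 r) →
      FPValidFrom Tr ((K : ℤ) - w) ((K : ℤ) + 1) (cproj ((K : ℤ) - w) ((K : ℤ) + 1) b) ts →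
      squash (cproj ((K : ℤ) - w) (K : ℤ) bo) (cmap ((K : ℤ) - w) (K : ℤ) ρs) =
        squash (cproj ((K : ℤ) - w) (K : ℤ) b) (lmap ((K : ℤ) - w) (K : ℤ) ts) →
      ∃ ns : List (RMove Q D d × RConf Q D d),
        RExecValidFrom Tr b ns ∧
        NoStutter (-(w : ℤ)) ((K : ℤ) + 1) b ns ∧
        (∀ j k : ℤ, k ≤ (K : ℤ) →
          squash (cproj j k b) (cmap j k ns) = squash (cproj j k bo) (cmap j k ρs)) ∧
        squash (cproj ((K : ℤ) + 1 - w) ((K : ℤ) + 1) b) (cmap ((K : ℤ) + 1 - w) ((K : ℤ) + 1) ns) =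
          squash (cproj ((K : ℤ) + 1 - w) ((K : ℤ) + 1) b) (lmap ((K : ℤ) + 1 - w) ((K : ℤ) + 1) ts) := by
  have hK1 : (K : ℤ) ≤ (K : ℤ) + 1 := by omega
  have hnw1 : (K : ℤ) - w ≤ (K : ℤ) + 1 - w := by omega
  intro n
  induction n with
  | zero =>
      intro ρs ts b bo hlen _ _ _ _ _ _
      have h1 : ρs = [] := List.length_eq_zero_iff.mp (by omega)
      have h2 : ts = [] := List.length_eq_zero_iff.mp (by omega)
      subst h1; subst h2
      exact ⟨[], trivial, trivial, fun j k _ => rfl, rfl⟩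
  | succ n ih =>
      have do_insert : ∀ (ρs : List (RMove Q D d × RConf Q D d)) (mv2 : RMove Q D d)
          (tc' : RLConf Q D d) (trest) (b bo : RConf Q D d),
          ρs.length + ((mv2, tc') :: trest).length ≤ n + 1 →
          RExecValidFrom Tr bo ρs →
          NoStutter (-(w : ℤ)) (K : ℤ) bo ρs →
          (∀ p : Q × ℕ, (p.2 : ℤ) ≤ (K : ℤ) → (p ∈ b.1 ↔ p ∈ bo.1)) →
          (∀ r : ℕ × Fin d, (r.1 : ℤ) ≤ (K : ℤ) → b.2 r = bo.2 r) →
          FPValidFrom Tr ((K : ℤ) - w) ((K : ℤ) + 1) (cproj ((K : ℤ) - w) ((K : ℤ) + 1) b)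
            ((mv2, tc') :: trest) →
          squash (cproj ((K : ℤ) - w) (K : ℤ) bo) (cmap ((K : ℤ) - w) (K : ℤ) ρs) =
            squash (cproj ((K : ℤ) - w) (K : ℤ) b)
              (lmap ((K : ℤ) - w) (K : ℤ) ((mv2, tc') :: trest)) →
          lproj ((K : ℤ) - w) (K : ℤ) tc' = cproj ((K : ℤ) - w) (K : ℤ) b →
          ∃ ns : List (RMove Q D d × RConf Q D d),
            RExecValidFrom Tr b ns ∧
            NoStutter (-(w : ℤ)) ((K : ℤ) + 1) b ns ∧
            (∀ j k : ℤ, k ≤ (K : ℤ) →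
              squash (cproj j k b) (cmap j k ns) = squash (cproj j k bo) (cmap j k ρs)) ∧
            squash (cproj ((K : ℤ) + 1 - w) ((K : ℤ) + 1) b)
                (cmap ((K : ℤ) + 1 - w) ((K : ℤ) + 1) ns) =
              squash (cproj ((K : ℤ) + 1 - w) ((K : ℤ) + 1) b)
                (lmap ((K : ℤ) + 1 - w) ((K : ℤ) + 1) ((mv2, tc') :: trest)) := by
        intro ρs mv2 tc' trest b bo hlen hval hnost hagl hagr htval halign hvist
        obtain ⟨hls, htne, htrest⟩ := htval
        obtain ⟨b', hstepb, htw', hagl', hagr', hne'⟩ := insert_step hvis w K hw hls htne hvist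
        have hagl2 : ∀ p : Q × ℕ, (p.2 : ℤ) ≤ (K : ℤ) → (p ∈ b'.1 ↔ p ∈ bo.1) :=
          fun p hp => (hagl' p hp).trans (hagl p hp)
        have hagr2 : ∀ r : ℕ × Fin d, (r.1 : ℤ) ≤ (K : ℤ) → b'.2 r = bo.2 r :=
          fun r hr => (hagr' r hr).trans (hagr r hr)
        have hovb' : cproj ((K : ℤ) - w) (K : ℤ) b' = cproj ((K : ℤ) - w) (K : ℤ) b :=
          cproj_eq_of_agree_le le_rfl hagl' hagr'
        have htval' : FPValidFrom Tr ((K : ℤ) - w) ((K : ℤ) + 1)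
            (cproj ((K : ℤ) - w) ((K : ℤ) + 1) b') trest := by
          rw [htw']; exact htrest
        have halign' : squash (cproj ((K : ℤ) - w) (K : ℤ) bo) (cmap ((K : ℤ) - w) (K : ℤ) ρs) =
            squash (cproj ((K : ℤ) - w) (K : ℤ) b') (lmap ((K : ℤ) - w) (K : ℤ) trest) := by
          rw [hovb', halign, lmap_cons, squash_cons_eq _ _ hvist]
        obtain ⟨ns', hvalns, hnostns, hlow, hnwih⟩ :=
          ih ρs trest b' bo (by simp at hlen ⊢; omega) hval hnost hagl2 hagr2 htval' halign'
        refine ⟨(mv2, b') :: ns', ⟨hstepb, hvalns⟩, ⟨hne', hnostns⟩, ?_, ?_⟩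
        · intro j k hk
          have e1 : cproj j k b' = cproj j k b := cproj_eq_of_agree_le hk hagl' hagr'
          rw [cmap_cons, squash_cons_eq _ _ e1, ← e1]
          exact hlow j k hk
        · have e2 : cproj ((K : ℤ) + 1 - w) ((K : ℤ) + 1) b' =
              lproj ((K : ℤ) + 1 - w) ((K : ℤ) + 1) tc' := by
            rw [← htw', lproj_cproj hnw1 le_rfl]
          rw [cmap_cons, lmap_cons, e2]
          rw [e2] at hnwih
          by_cases h : lproj ((K : ℤ) + 1 - w) ((K : ℤ) + 1) tc' =
              cproj ((K : ℤ) + 1 - w) ((K : ℤ) + 1) b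
          · rw [squash_cons_eq _ _ h, squash_cons_eq _ _ h]
            rw [h] at hnwih
            exact hnwih
          · rw [squash_cons_ne _ _ h, squash_cons_ne _ _ h]
            exact congrArg _ hnwih
      intro ρs ts b bo hlen hval hnost hagl hagr htval halign
      have hob : cproj ((K : ℤ) - w) (K : ℤ) b = cproj ((K : ℤ) - w) (K : ℤ) bo :=
        cproj_eq_of_agree_le le_rfl hagl hagr
      rcases ρs with _ | ⟨⟨mv, c⟩, ρrest⟩
      · rcases ts with _ | ⟨⟨mv2, tc'⟩, trest⟩
        · exact ⟨[], trivial, trivial, fun j k _ => rfl, rfl⟩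
        · have hvist : lproj ((K : ℤ) - w) (K : ℤ) tc' = cproj ((K : ℤ) - w) (K : ℤ) b := by
            by_contra hne
            rw [cmap_nil, squash_nil, lmap_cons, squash_cons_ne _ _ hne] at halign
            exact List.cons_ne_nil _ _ halign.symm
          exact do_insert [] mv2 tc' trest b bo hlen hval hnost hagl hagr htval halign hvist
      · obtain ⟨hstep, hvrest⟩ := hval
        obtain ⟨hbwne, hnrest⟩ := hnost
        by_cases hvisρ : cproj ((K : ℤ) - w) (K : ℤ) c = cproj ((K : ℤ) - w) (K : ℤ) bo
        · -- ρ-step invisible on the overlap: execute it on `b`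
          obtain ⟨R, hRw, hReff, hdata⟩ := diff_data hstep hbwne
          have hnotov : ¬ InW ((K : ℤ) - w) (K : ℤ) R := by
            intro hov
            rcases hdata with ⟨p, hp2, hpne⟩ | ⟨r, hr1, hrne⟩
            · exact hpne ((loc_agree_of_cproj_eq hvisρ (by rw [hp2]; exact hov)).symm)
            · exact hrne ((reg_agree_of_cproj_eq hvisρ (by rw [hr1]; exact hov)).symm)
          have hRK : (R : ℤ) < (K : ℤ) - w := by
            unfold InW at hRw hnotov
            omega
          have hRle : (R : ℤ) ≤ (K : ℤ) := hRw.2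
          have heff : (mv.2 : ℤ) + 1 ≤ (K : ℤ) - w := by
            rcases hReff with h | ⟨_, h⟩
            · have : (mv.2 : ℤ) = (R : ℤ) := by exact_mod_cast congrArg (Nat.cast : ℕ → ℤ) h
              omega
            · have : (mv.2 : ℤ) + 1 = (R : ℤ) := by
                exact_mod_cast congrArg (Nat.cast : ℕ → ℤ) h
              omega
          have hmv2K : (mv.2 : ℤ) ≤ (K : ℤ) := by
            have : (0 : ℤ) ≤ (w : ℤ) := Int.ofNat_nonneg w
            omega
          obtain ⟨b', φ, hstepb, hbreg, hbloc, hcloc, hagl', hagr'⟩ :=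
            step_transport hstep hmv2K hagl hagr
          have hmdle : ((mdst mv).2 : ℤ) ≤ (K : ℤ) - w := by
            rcases mdst_snd (mv := mv) with h | ⟨_, h⟩
            · rw [show ((mdst mv).2 : ℤ) = (mv.2 : ℤ) by
                exact_mod_cast congrArg (Nat.cast : ℕ → ℤ) h]
              omega
            · rw [show ((mdst mv).2 : ℤ) = (mv.2 : ℤ) + 1 by
                exact_mod_cast congrArg (Nat.cast : ℕ → ℤ) h]
              omega
          have hdb : ((K : ℤ) - w) ≤ ((mdst mv).2 : ℤ) → mdst mv ∈ b.1 := by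
            intro h
            have h1 : mdst mv ∈ c.1 := by
              rw [hcloc]
              exact mem_locSet.mpr (Or.inl rfl)
            have h2 : mdst mv ∈ bo.1 :=
              (loc_agree_of_cproj_eq hvisρ ⟨h, by omega⟩).mp h1
            exact (hagl _ (by omega)).mpr h2
          have htwpres : cproj ((K : ℤ) - w) ((K : ℤ) + 1) b' =
              cproj ((K : ℤ) - w) ((K : ℤ) + 1) b := by
            refine cproj_eq_of_agree ?_ ?_
            · intro p hwp
              rw [hbloc, mem_locSet]
              have hpm : p ≠ msrc mv := by
                intro he
                have : ((msrc mv).2 : ℤ) = (mv.2 : ℤ) := by rw [msrc_snd]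
                rw [he] at hwp
                have := hwp.1
                omega
              constructor
              · rintro (he | ⟨hpb, _⟩)
                · rw [he]
                  refine hdb ?_
                  rw [← he]
                  exact_mod_cast hwp.1
                · exact hpb
              · intro hpb
                exact Or.inr ⟨hpb, fun hc => hpm hc.2⟩
            · intro r hwr
              rw [hbreg]
              refine mreg_apply_ne ?_
              intro he
              have : ((r.1 : ℕ) : ℤ) = (mv.2 : ℤ) := by exact_mod_cast congrArg (Nat.cast : ℕ → ℤ) he
              have := hwr.1
              omega
          have hovpres : cproj ((K : ℤ) - w) (K : ℤ) b' = cproj ((K : ℤ) - w) (K : ℤ) b := by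
            rw [← lproj_cproj le_rfl hK1 b', ← lproj_cproj le_rfl hK1 b, htwpres]
          have htval' : FPValidFrom Tr ((K : ℤ) - w) ((K : ℤ) + 1)
              (cproj ((K : ℤ) - w) ((K : ℤ) + 1) b') ts := by
            rw [htwpres]; exact htval
          have halign' : squash (cproj ((K : ℤ) - w) (K : ℤ) c) (cmap ((K : ℤ) - w) (K : ℤ) ρrest) =
              squash (cproj ((K : ℤ) - w) (K : ℤ) b') (lmap ((K : ℤ) - w) (K : ℤ) ts) := by
            rw [hovpres, hvisρ, ← halign, cmap_cons, squash_cons_eq _ _ hvisρ]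
          obtain ⟨ns', hvalns, hnostns, hlow, hnwih⟩ :=
            ih ρrest ts b' c (by simp at hlen ⊢; omega) hvrest hnrest hagl' hagr' htval' halign'
          refine ⟨(mv, b') :: ns', ⟨hstepb, hvalns⟩, ⟨?_, hnostns⟩, ?_, ?_⟩
          · refine cproj_ne_transfer (a := bo) (a' := c) ⟨by omega, by omega⟩ hdata ?_ ?_ ?_ ?_
            · intro p hp2
              exact hagl p (by rw [hp2]; omega)
            · intro p hp2
              exact hagl' p (by rw [hp2]; omega)
            · intro r hr1
              exact hagr r (by rw [hr1]; omega)
            · intro r hr1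
              exact hagr' r (by rw [hr1]; omega)
          · intro j k hk
            have e0 : cproj j k b = cproj j k bo := cproj_eq_of_agree_le hk hagl hagr
            have e1 : cproj j k b' = cproj j k c := cproj_eq_of_agree_le hk hagl' hagr'
            have htl := hlow j k hk
            rw [e1] at htl
            rw [cmap_cons, cmap_cons, e0, e1]
            by_cases h : cproj j k c = cproj j k bo
            · rw [squash_cons_eq _ _ h, squash_cons_eq _ _ h, ← h]
              exact htl
            · rw [squash_cons_ne _ _ h, squash_cons_ne _ _ h]
              exact congrArg _ htl
          · have e2 : cproj ((K : ℤ) + 1 - w) ((K : ℤ) + 1) b' =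
                cproj ((K : ℤ) + 1 - w) ((K : ℤ) + 1) b := by
              rw [← lproj_cproj hnw1 le_rfl b', ← lproj_cproj hnw1 le_rfl b, htwpres]
            rw [cmap_cons, squash_cons_eq _ _ e2, ← e2]
            rw [e2] at hnwih
            rw [← e2] at hnwih
            exact hnwih
        · rcases ts with _ | ⟨⟨mv2, tc'⟩, trest⟩
          · exfalso
            rw [lmap_nil, squash_nil, cmap_cons, squash_cons_ne _ _ hvisρ] at halign
            exact List.cons_ne_nil _ _ halign
          · by_cases hvist : lproj ((K : ℤ) - w) (K : ℤ) tc' = cproj ((K : ℤ) - w) (K : ℤ) b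
            · exact do_insert ((mv, c) :: ρrest) mv2 tc' trest b bo hlen
                ⟨hstep, hvrest⟩ ⟨hbwne, hnrest⟩ hagl hagr htval halign hvist
            · -- common step
              obtain ⟨hls, htne, htrest⟩ := htval
              rw [cmap_cons, lmap_cons, squash_cons_ne _ _ hvisρ,
                squash_cons_ne _ _ hvist, List.cons.injEq, Prod.mk.injEq] at halign
              obtain ⟨⟨hmveq, hcfg⟩, htail⟩ := halign
              subst hmveq
              obtain ⟨aT, aT', hstepT, hpT, hpT'⟩ := hls
              obtain ⟨htrT, hsrcT, hroT, haregT, φT, hTloc⟩ := RStep_iff.mp hstepT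
              obtain ⟨R, hRw, hReff, hdata⟩ := diff_data hstep hbwne
              have hmv2K : (mv.2 : ℤ) ≤ (K : ℤ) := by
                rcases hReff with h | ⟨_, h⟩
                · have : (mv.2 : ℤ) = (R : ℤ) := by
                    exact_mod_cast congrArg (Nat.cast : ℕ → ℤ) h
                  have := hRw.2
                  omega
                · have : (mv.2 : ℤ) + 1 = (R : ℤ) := by
                    exact_mod_cast congrArg (Nat.cast : ℕ → ℤ) h
                  have := hRw.2
                  omega
              obtain ⟨b', φ, hstepb, hbreg, hbloc, hcloc, hagl', hagr'⟩ :=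
                step_transport hstep hmv2K hagl hagr
              have hcc : cproj ((K : ℤ) - w) (K : ℤ) c = cproj ((K : ℤ) - w) (K : ℤ) aT' := by
                rw [hcfg, ← hpT', lproj_cproj le_rfl hK1]
              have htc' : cproj ((K : ℤ) - w) ((K : ℤ) + 1) b' = tc' := by
                rw [← hpT']
                refine cproj_eq_of_agree ?_ ?_
                · intro p hwp
                  rw [hbloc, hTloc, mem_locSet, mem_locSet]
                  have hpba : p ∈ b.1 ↔ p ∈ aT.1 := (loc_agree_of_cproj_eq hpT hwp).symm
                  by_cases hd : p = mdst mv
                  · constructor <;> intro _ <;> exact Or.inl hd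
                  · by_cases hms : p = msrc mv
                    · have hbo : msrc mv ∈ bo.1 := (RStep_iff.mp hstep).2.1
                      have hbb : msrc mv ∈ b.1 := (hagl _ (by rw [msrc_snd]; exact hmv2K)).mpr hbo
                      have haT : msrc mv ∈ aT.1 := by
                        rw [← hms] at hbb ⊢
                        exact hpba.mp hbb
                      have hovs : InW ((K : ℤ) - w) (K : ℤ) (msrc mv).2 := by
                        subst hms
                        exact ⟨hwp.1, by rw [msrc_snd]; exact hmv2K⟩
                      have h1 : (msrc mv ∈ c.1) ↔ (msrc mv ∈ aT'.1) :=
                        loc_agree_of_cproj_eq hcc hovs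
                      rw [hcloc, hTloc, mem_locSet, mem_locSet] at h1
                      have hsmd : msrc mv ≠ mdst mv := by
                        rw [← hms]
                        exact hd
                      subst hms
                      rcases Bool.eq_false_or_eq_true φ with hφ | hφ <;>
                        rcases Bool.eq_false_or_eq_true φT with hφT | hφT <;>
                          simp [hφ, hφT, hsmd, hbo, haT, hbb] at h1 ⊢ <;> tauto
                    · tauto
                · intro r hwr
                  rw [hbreg, haregT]
                  exact mreg_congr_at ((reg_agree_of_cproj_eq hpT hwr).symm)
              have htval' : FPValidFrom Tr ((K : ℤ) - w) ((K : ℤ) + 1)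
                  (cproj ((K : ℤ) - w) ((K : ℤ) + 1) b') trest := by
                rw [htc']; exact htrest
              have hovb' : cproj ((K : ℤ) - w) (K : ℤ) b' = lproj ((K : ℤ) - w) (K : ℤ) tc' := by
                rw [← htc', lproj_cproj le_rfl hK1]
              have halign' : squash (cproj ((K : ℤ) - w) (K : ℤ) c)
                  (cmap ((K : ℤ) - w) (K : ℤ) ρrest) =
                  squash (cproj ((K : ℤ) - w) (K : ℤ) b') (lmap ((K : ℤ) - w) (K : ℤ) trest) := by
                rw [hovb', htail]
              obtain ⟨ns', hvalns, hnostns, hlow, hnwih⟩ :=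
                ih ρrest trest b' c (by simp at hlen ⊢; omega) hvrest hnrest hagl' hagr'
                  htval' halign'
              refine ⟨(mv, b') :: ns', ⟨hstepb, hvalns⟩, ⟨?_, hnostns⟩, ?_, ?_⟩
              · refine cproj_ne_transfer (a := bo) (a' := c)
                  ⟨by omega, by have := hRw.2; omega⟩ hdata ?_ ?_ ?_ ?_
                · intro p hp2
                  exact hagl p (by rw [hp2]; exact hRw.2)
                · intro p hp2
                  exact hagl' p (by rw [hp2]; exact hRw.2)
                · intro r hr1
                  exact hagr r (by rw [hr1]; exact hRw.2)
                · intro r hr1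
                  exact hagr' r (by rw [hr1]; exact hRw.2)
              · intro j k hk
                have e0 : cproj j k b = cproj j k bo := cproj_eq_of_agree_le hk hagl hagr
                have e1 : cproj j k b' = cproj j k c := cproj_eq_of_agree_le hk hagl' hagr'
                have htl := hlow j k hk
                rw [e1] at htl
                rw [cmap_cons, cmap_cons, e0, e1]
                by_cases h : cproj j k c = cproj j k bo
                · rw [squash_cons_eq _ _ h, squash_cons_eq _ _ h, ← h]
                  exact htl
                · rw [squash_cons_ne _ _ h, squash_cons_ne _ _ h]
                  exact congrArg _ htl
              · have e2 : cproj ((K : ℤ) + 1 - w) ((K : ℤ) + 1) b' =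
                    lproj ((K : ℤ) + 1 - w) ((K : ℤ) + 1) tc' := by
                  rw [← htc', lproj_cproj hnw1 le_rfl]
                rw [cmap_cons, lmap_cons, e2]
                rw [e2] at hnwih
                by_cases h : lproj ((K : ℤ) + 1 - w) ((K : ℤ) + 1) tc' =
                    cproj ((K : ℤ) + 1 - w) ((K : ℤ) + 1) b
                · rw [squash_cons_eq _ _ h, squash_cons_eq _ _ h]
                  rw [h] at hnwih
                  exact hnwih
                · rw [squash_cons_ne _ _ h, squash_cons_ne _ _ h]
                  exact congrArg _ hnwih
end Walk
section Final
variable {Q D : Type} {d : ℕ} {Tr : Set (Q × RAct d D × Q)}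

lemma fp_def (j k : ℤ) (e : RExec Q D d) :
    e.fp j k = ⟨cproj j k e.first, squash (cproj j k e.first) (cmap j k e.steps)⟩ := rfl

lemma proj_def (j k : ℤ) (f : FP Q D d) :
    f.proj j k = ⟨lproj j k f.first, squash (lproj j k f.first) (lmap j k f.steps)⟩ := rfl

end Final

/-- Combining footprints into an execution: compatible window footprints
`τ_k` on `[k-w, k]` (for `k ≤ K`, with `w ≥ v - 1`), linked by footprints
`T_k` on `[k-w, k+1]`, arise as the footprints of a single execution. -/
theorem combining_footprints {Q D : Type} {d v : ℕ}
    (Tr : Set (Q × RAct d D × Q))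
    (hvis : ∀ q i α s q', ((q, RAct.read i α s, q') : Q × RAct d D × Q) ∈ Tr → i ≤ v)
    (K w : ℕ) (hw : v ≤ w + 1)
    (τ T : ℕ → FP Q D d)
    (hτ : ∀ k, k ≤ K → (τ k).Valid Tr ((k : ℤ) - w) (k : ℤ))
    (hT : ∀ k, k + 1 ≤ K → (T k).Valid Tr ((k : ℤ) - w) ((k : ℤ) + 1))
    (hT1 : ∀ k, k + 1 ≤ K → (T k).proj ((k : ℤ) - w) (k : ℤ) = τ k)
    (hT2 : ∀ k, k + 1 ≤ K → (T k).proj ((k : ℤ) - w + 1) ((k : ℤ) + 1) = τ (k + 1)) :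
    ∃ ρ : RExec Q D d, ρ.Valid Tr ∧
      ∀ k, k ≤ K → ρ.fp ((k : ℤ) - w) (k : ℤ) = τ k := by
  suffices h : ∀ n : ℕ, n ≤ K → ∃ ρ : RExec Q D d, ρ.Valid Tr ∧
      NoStutter (-(w : ℤ)) (n : ℤ) ρ.first ρ.steps ∧
      ∀ k : ℕ, k ≤ n → ρ.fp ((k : ℤ) - w) (k : ℤ) = τ k by
    obtain ⟨ρ, h1, _, h3⟩ := h K le_rfl
    exact ⟨ρ, h1, h3⟩
  intro n
  induction n with
  | zero =>
      intro _
      obtain ⟨⟨a0, ha0⟩, hv0⟩ := hτ 0 (Nat.zero_le K)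
      have hval0 : FPValidFrom Tr ((0 : ℤ) - w) (0 : ℤ)
          (cproj ((0 : ℤ) - w) (0 : ℤ) a0) (τ 0).steps := by
        rw [show ((0:ℕ) : ℤ) = (0 : ℤ) from rfl] at ha0
        rw [ha0]
        exact hv0
      obtain ⟨ns, hvalns, hnost, hmap⟩ := realize (Tr := Tr) (j := (0 : ℤ) - w) (k := (0 : ℤ))
        (by omega) (τ 0).steps a0 hval0
      refine ⟨⟨a0, ns⟩, hvalns, ?_, ?_⟩
      · have he : (-(w : ℤ)) = ((0:ℕ) : ℤ) - w := by push_cast; ring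
        have he2 : ((0:ℕ) : ℤ) = (0 : ℤ) := rfl
        rw [he, he2]
        exact hnost
      · intro k hk
        interval_cases k
        rw [fp_def]
        have he2 : ((0:ℕ) : ℤ) = (0 : ℤ) := rfl
        rw [he2] at ha0 ⊢
        show FP.mk _ _ = τ 0
        rw [show (⟨a0, ns⟩ : RExec Q D d).steps = ns from rfl,
          show (⟨a0, ns⟩ : RExec Q D d).first = a0 from rfl,
          show cmap ((0:ℤ) - w) (0:ℤ) ns = (τ 0).steps from hmap, ha0,
          squash_eq_self (Tr := Tr) _ _ hv0]
  | succ n ihn =>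
      intro hn1
      obtain ⟨ρ, hval, hnost, hfp⟩ := ihn (by omega)
      obtain ⟨⟨aT0, haT0⟩, hTv⟩ := hT n (by omega)
      -- component equalities
      have hfpn := hfp n le_rfl
      have hfirstρ : cproj ((n : ℤ) - w) (n : ℤ) ρ.first = (τ n).first :=
        congrArg FP.first hfpn
      have hstepsρ : squash (cproj ((n : ℤ) - w) (n : ℤ) ρ.first)
          (cmap ((n : ℤ) - w) (n : ℤ) ρ.steps) = (τ n).steps :=
        congrArg FP.steps hfpn
      have hT1n := hT1 n (by omega)
      have hfirstT : lproj ((n : ℤ) - w) (n : ℤ) (T n).first = (τ n).first :=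
        congrArg FP.first hT1n
      have hstepsT : squash (lproj ((n : ℤ) - w) (n : ℤ) (T n).first)
          (lmap ((n : ℤ) - w) (n : ℤ) (T n).steps) = (τ n).steps :=
        congrArg FP.steps hT1n
      have hnK1 : (n : ℤ) ≤ (n : ℤ) + 1 := by omega
      have hovaT0 : cproj ((n : ℤ) - w) (n : ℤ) aT0 = (τ n).first := by
        rw [← lproj_cproj (le_refl ((n : ℤ) - w)) hnK1 aT0, haT0, hfirstT]
      have hovagree : cproj ((n : ℤ) - w) (n : ℤ) ρ.first =
          cproj ((n : ℤ) - w) (n : ℤ) aT0 := by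
        rw [hovaT0, hfirstρ]
      -- the merged starting configuration
      set b0 : RConf Q D d :=
        ({p : Q × ℕ | (p ∈ ρ.first.1 ∧ (p.2 : ℤ) ≤ (n : ℤ)) ∨
            (p ∈ aT0.1 ∧ (n : ℤ) < (p.2 : ℤ))},
          fun r => if (r.1 : ℤ) ≤ (n : ℤ) then ρ.first.2 r else aT0.2 r) with hb0
      have hb0l : ∀ p : Q × ℕ, (p.2 : ℤ) ≤ (n : ℤ) → (p ∈ b0.1 ↔ p ∈ ρ.first.1) := by
        intro p hp
        rw [hb0]
        simp only [Set.mem_setOf_eq]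
        constructor
        · rintro (⟨h1, _⟩ | ⟨_, h2⟩)
          · exact h1
          · omega
        · intro h1
          exact Or.inl ⟨h1, hp⟩
      have hb0r : ∀ r : ℕ × Fin d, (r.1 : ℤ) ≤ (n : ℤ) → b0.2 r = ρ.first.2 r := by
        intro r hr
        rw [hb0]
        simp only [hr, if_pos]
      have hb0tw : cproj ((n : ℤ) - w) ((n : ℤ) + 1) b0 = (T n).first := by
        rw [← haT0]
        refine cproj_eq_of_agree ?_ ?_
        · intro p hwp
          by_cases hp : (p.2 : ℤ) ≤ (n : ℤ)
          · rw [hb0l p hp]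
            exact loc_agree_of_cproj_eq hovagree ⟨hwp.1, hp⟩
          · rw [hb0]
            simp only [Set.mem_setOf_eq]
            constructor
            · rintro (⟨_, h1⟩ | ⟨h1, _⟩)
              · omega
              · exact h1
            · intro h1
              exact Or.inr ⟨h1, by omega⟩
        · intro r hwr
          by_cases hr : (r.1 : ℤ) ≤ (n : ℤ)
          · rw [hb0r r hr]
            exact reg_agree_of_cproj_eq hovagree ⟨hwr.1, hr⟩
          · rw [hb0]
            simp only [hr, if_neg, if_false]
      have htval : FPValidFrom Tr ((n : ℤ) - w) ((n : ℤ) + 1)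
          (cproj ((n : ℤ) - w) ((n : ℤ) + 1) b0) (T n).steps := by
        rw [hb0tw]
        exact hTv
      have hovb0 : cproj ((n : ℤ) - w) (n : ℤ) b0 = lproj ((n : ℤ) - w) (n : ℤ) (T n).first := by
        rw [← hb0tw, lproj_cproj (le_refl ((n : ℤ) - w)) hnK1]
      have halign : squash (cproj ((n : ℤ) - w) (n : ℤ) ρ.first)
          (cmap ((n : ℤ) - w) (n : ℤ) ρ.steps) =
          squash (cproj ((n : ℤ) - w) (n : ℤ) b0) (lmap ((n : ℤ) - w) (n : ℤ) (T n).steps) := by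
        rw [hstepsρ, hovb0, hstepsT]
      obtain ⟨ns, hvalns, hnostns, hlow, hnw⟩ :=
        merge_walk hvis w n hw (ρ.steps.length + (T n).steps.length) ρ.steps (T n).steps
          b0 ρ.first le_rfl hval hnost hb0l hb0r htval halign
      have hcast : ((n + 1 : ℕ) : ℤ) = (n : ℤ) + 1 := by push_cast; ring
      refine ⟨⟨b0, ns⟩, hvalns, ?_, ?_⟩
      · show NoStutter (-(w : ℤ)) ((n + 1 : ℕ) : ℤ) b0 ns
        rw [hcast]
        exact hnostns
      · intro k hk
        rcases Nat.lt_or_ge k (n + 1) with hkn | hkn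
        · -- k ≤ n : use the low-window claim
          have hkn' : k ≤ n := by omega
          have hkz : (k : ℤ) ≤ (n : ℤ) := by exact_mod_cast hkn'
          rw [fp_def]
          have e0 : cproj ((k : ℤ) - w) (k : ℤ) b0 = cproj ((k : ℤ) - w) (k : ℤ) ρ.first :=
            cproj_eq_of_agree_le hkz hb0l hb0r
          show FP.mk _ _ = τ k
          rw [show (⟨b0, ns⟩ : RExec Q D d).steps = ns from rfl,
            show (⟨b0, ns⟩ : RExec Q D d).first = b0 from rfl,
            hlow ((k : ℤ) - w) (k : ℤ) hkz, e0, ← fp_def]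
          exact hfp k hkn'
        · -- k = n + 1 : use the new-window claim
          have hkeq : k = n + 1 := by omega
          subst hkeq
          have hT2n := hT2 n (by omega)
          rw [proj_def] at hT2n
          have ew : (n : ℤ) - w + 1 = (n : ℤ) + 1 - w := by ring
          rw [ew] at hT2n
          have hfirst2 : lproj ((n : ℤ) + 1 - w) ((n : ℤ) + 1) (T n).first = (τ (n + 1)).first :=
            congrArg FP.first hT2n
          have hsteps2 : squash (lproj ((n : ℤ) + 1 - w) ((n : ℤ) + 1) (T n).first)
              (lmap ((n : ℤ) + 1 - w) ((n : ℤ) + 1) (T n).steps) = (τ (n + 1)).steps :=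
            congrArg FP.steps hT2n
          have hnw1 : (n : ℤ) - w ≤ (n : ℤ) + 1 - w := by omega
          have hnwb0 : cproj ((n : ℤ) + 1 - w) ((n : ℤ) + 1) b0 =
              lproj ((n : ℤ) + 1 - w) ((n : ℤ) + 1) (T n).first := by
            rw [← hb0tw, lproj_cproj hnw1 le_rfl]
          rw [fp_def]
          show FP.mk _ _ = τ (n + 1)
          rw [show (⟨b0, ns⟩ : RExec Q D d).steps = ns from rfl,
            show (⟨b0, ns⟩ : RExec Q D d).first = b0 from rfl]
          rw [show ((n + 1 : ℕ) : ℤ) - (w : ℤ) = (n : ℤ) + 1 - w by push_cast; ring,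
            show ((n + 1 : ℕ) : ℤ) = (n : ℤ) + 1 by push_cast; ring]
          rw [hnw, hnwb0, hsteps2, hfirst2]
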